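/- Let n > 1 and λ2, λ3, k > 0 with λ2 * (n-1)^((n-1)/n) > n * k * λ3, and let 0 < Tb_u < Tb_s be the two positive zeros of f(x) = λ2 * x^n/(λ3^n + x^n) - k x. Then f(x) < 0 for x ∈ (0, Tb_u), f(x) > 0 for x ∈ (Tb_u, Tb_s), and f(x) < 0 for x > Tb_s. -/

import Mathlib

open Real Set

private lemma phi_strictConvex (c n : ℝ) (hc : 0 < c) (hn : 1 < n) :
    StrictConvexOn ℝ (Ioi 0) (fun x : ℝ => c * x ^ (1 - n) + x) := by
  set φ : ℝ → ℝ := fun x => c * x ^ (1 - n) + x with hφ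
  have hd1 : ∀ x : ℝ, x ≠ 0 →
      HasDerivAt φ (c * ((1 - n) * x ^ (1 - n - 1)) + 1) x := by
    intro x hx
    exact ((Real.hasDerivAt_rpow_const (Or.inl hx)).const_mul c).add (hasDerivAt_id x)
  apply strictConvexOn_of_deriv2_pos (convex_Ioi 0)
  · intro x hx
    exact ((hd1 x (ne_of_gt hx)).continuousAt).continuousWithinAt
  · intro x hx
    rw [interior_Ioi] at hx
    have hx0 : (0:ℝ) < x := hx
    have hev : deriv φ =ᶠ[nhds x] fun y => c * ((1 - n) * y ^ (1 - n - 1)) + 1 := by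
      filter_upwards [isOpen_Ioi.eventually_mem hx] with y hy
      exact (hd1 y (ne_of_gt hy)).deriv
    have hd2 : HasDerivAt (fun y : ℝ => c * ((1 - n) * y ^ (1 - n - 1)) + 1)
        (c * ((1 - n) * ((1 - n - 1) * x ^ (1 - n - 1 - 1)))) x := by
      have := ((Real.hasDerivAt_rpow_const (x := x) (p := 1 - n - 1)
        (Or.inl (ne_of_gt hx0))).const_mul (1 - n)).const_mul c
      simpa using this.add_const 1
    have heq : deriv^[2] φ x = c * ((1 - n) * ((1 - n - 1) * x ^ (1 - n - 1 - 1))) := by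
      show deriv (deriv φ) x = _
      rw [Filter.EventuallyEq.deriv_eq hev]
      exact hd2.deriv
    rw [heq]
    have hp : (0:ℝ) < x ^ (1 - n - 1 - 1) := Real.rpow_pos_of_pos hx0 _
    have hrw : c * ((1 - n) * ((1 - n - 1) * x ^ (1 - n - 1 - 1)))
        = c * x ^ (1 - n - 1 - 1) * ((n - 1) * n) := by ring
    rw [hrw]
    exact mul_pos (mul_pos hc hp) (mul_pos (by linarith) (by linarith))

theorem stmt_6 (n lam2 lam3 k : ℝ) (hn : 1 < n) (h2 : 0 < lam2) (h3 : 0 < lam3)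
    (hk : 0 < k)
    (f : ℝ → ℝ) (hf : ∀ x, f x = lam2 * x ^ n / (lam3 ^ n + x ^ n) - k * x)
    (hcond : lam2 * (n - 1) ^ ((n - 1) / n) > n * k * lam3)
    (Tbu Tbs : ℝ) (hu : 0 < Tbu) (hus : Tbu < Tbs)
    (hfu : f Tbu = 0) (hfs : f Tbs = 0) :
    (∀ x ∈ Ioo 0 Tbu, f x < 0) ∧ (∀ x ∈ Ioo Tbu Tbs, f x > 0) ∧
      ∀ x, Tbs < x → f x < 0 := by
  obtain ⟨c, hc⟩ : ∃ c : ℝ, c = lam3 ^ n := ⟨_, rfl⟩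
  simp only [← hc] at hf
  have hc0 : 0 < c := hc ▸ Real.rpow_pos_of_pos h3 n
  obtain ⟨φ, hφ⟩ : ∃ φ : ℝ → ℝ, φ = fun x : ℝ => c * x ^ (1 - n) + x := ⟨_, rfl⟩
  -- factorization
  have hfac : ∀ x : ℝ, 0 < x → f x = x ^ n / (c + x ^ n) * (lam2 - k * φ x) := by
    intro x hx
    have hxn : 0 < x ^ n := Real.rpow_pos_of_pos hx n
    have hden : 0 < c + x ^ n := by positivity
    have hmul : x ^ (1 - n) * x ^ n = x := by
      rw [← Real.rpow_add hx]; norm_num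
    have h1 : φ x * x ^ n = x * (c + x ^ n) := by
      simp only [hφ]
      rw [add_mul, mul_assoc, hmul]; ring
    have key : x ^ n / (c + x ^ n) * (k * φ x) = k * x := by
      rw [div_mul_eq_mul_div, div_eq_iff (ne_of_gt hden)]
      linear_combination k * h1
    rw [hf, mul_sub, key]
    ring
  have hconv : StrictConvexOn ℝ (Ioi 0) φ := hφ ▸ phi_strictConvex c n hc0 hn
  have hs0 : 0 < Tbs := hu.trans hus
  have hnum : ∀ x : ℝ, 0 < x → 0 < x ^ n / (c + x ^ n) := by
    intro x hx
    have hxn : 0 < x ^ n := Real.rpow_pos_of_pos hx n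
    positivity
  have hφu : k * φ Tbu = lam2 := by
    rcases mul_eq_zero.1 ((hfac Tbu hu) ▸ hfu) with h | h
    · exact absurd h (ne_of_gt (hnum Tbu hu))
    · linarith
  have hφs : k * φ Tbs = lam2 := by
    rcases mul_eq_zero.1 ((hfac Tbs hs0) ▸ hfs) with h | h
    · exact absurd h (ne_of_gt (hnum Tbs hs0))
    · linarith
  -- key convexity consequence
  have key : ∀ a b x : ℝ, 0 < a → a < x → x < b →
      φ x < (b - x) / (b - a) * φ a + (x - a) / (b - a) * φ b := by
    intro a b x ha hax hxb
    have hab : a < b := hax.trans hxb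
    have hba : 0 < b - a := by linarith
    have h1 : (0:ℝ) < (b - x) / (b - a) := div_pos (by linarith) hba
    have h2 : (0:ℝ) < (x - a) / (b - a) := div_pos (by linarith) hba
    have h3' : (b - x) / (b - a) + (x - a) / (b - a) = 1 := by
      rw [← add_div, div_eq_one_iff_eq (ne_of_gt hba)]; ring
    have hcv := hconv.2 (show a ∈ Ioi (0:ℝ) from ha)
      (show b ∈ Ioi (0:ℝ) from ha.trans hab) (ne_of_lt hab) h1 h2 h3'
    simp only [smul_eq_mul] at hcv
    have hx : (b - x) / (b - a) * a + (x - a) / (b - a) * b = x := by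
      rw [div_mul_eq_mul_div, div_mul_eq_mul_div, ← add_div,
        div_eq_iff (ne_of_gt hba)]; ring
    rwa [hx] at hcv
  refine ⟨?_, ?_, ?_⟩
  · -- x ∈ (0, Tbu) : f x < 0
    intro x hx
    obtain ⟨hx0, hxu⟩ := hx
    have h := key x Tbs Tbu hx0 hxu hus
    have hba : 0 < Tbs - x := by linarith
    have hA : (0:ℝ) < (Tbs - Tbu) / (Tbs - x) := div_pos (by linarith) hba
    have hsum : (Tbs - Tbu) / (Tbs - x) + (Tbu - x) / (Tbs - x) = 1 := by
      rw [← add_div, div_eq_one_iff_eq (ne_of_gt hba)]; ring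
    have hkh := mul_lt_mul_of_pos_left h hk
    have hBs : (Tbu - x) / (Tbs - x) * (lam2 - k * φ Tbs) = 0 := by
      rw [show lam2 - k * φ Tbs = 0 by linarith]; ring
    have hsum2 : (Tbs - Tbu) / (Tbs - x) * lam2 + (Tbu - x) / (Tbs - x) * lam2 = lam2 := by
      rw [div_mul_eq_mul_div, div_mul_eq_mul_div, ← add_div,
        div_eq_iff (ne_of_gt hba)]
      ring
    have hAlt : (Tbs - Tbu) / (Tbs - x) * lam2 < (Tbs - Tbu) / (Tbs - x) * (k * φ x) := by
      nlinarith [hkh, hBs, hsum2, hφu]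
    have hφx : lam2 - k * φ x < 0 := by
      have := (mul_lt_mul_iff_right₀ hA).mp hAlt
      linarith
    rw [hfac x hx0]
    exact mul_neg_of_pos_of_neg (hnum x hx0) hφx
  · -- x ∈ (Tbu, Tbs) : f x > 0
    intro x hx
    obtain ⟨hux, hxs⟩ := hx
    have hx0 : 0 < x := hu.trans hux
    have h := key Tbu Tbs x hu hux hxs
    have hba : 0 < Tbs - Tbu := by linarith
    have hsum : (Tbs - x) / (Tbs - Tbu) + (x - Tbu) / (Tbs - Tbu) = 1 := by
      rw [← add_div, div_eq_one_iff_eq (ne_of_gt hba)]; ring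
    have hkh := mul_lt_mul_of_pos_left h hk
    have hAu : (Tbs - x) / (Tbs - Tbu) * (lam2 - k * φ Tbu) = 0 := by
      rw [show lam2 - k * φ Tbu = 0 by linarith]; ring
    have hBs : (x - Tbu) / (Tbs - Tbu) * (lam2 - k * φ Tbs) = 0 := by
      rw [show lam2 - k * φ Tbs = 0 by linarith]; ring
    have hsum2 : (Tbs - x) / (Tbs - Tbu) * lam2 + (x - Tbu) / (Tbs - Tbu) * lam2 = lam2 := by
      rw [div_mul_eq_mul_div, div_mul_eq_mul_div, ← add_div,
        div_eq_iff (ne_of_gt hba)]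
      ring
    have hφx : 0 < lam2 - k * φ x := by nlinarith [hkh, hsum2, hAu, hBs]
    rw [hfac x hx0]
    exact mul_pos (hnum x hx0) hφx
  · -- x > Tbs : f x < 0
    intro x hx
    have hx0 : 0 < x := hs0.trans hx
    have h := key Tbu x Tbs hu hus hx
    have hba : 0 < x - Tbu := by linarith
    have hB : (0:ℝ) < (Tbs - Tbu) / (x - Tbu) := div_pos (by linarith) hba
    have hsum : (x - Tbs) / (x - Tbu) + (Tbs - Tbu) / (x - Tbu) = 1 := by
      rw [← add_div, div_eq_one_iff_eq (ne_of_gt hba)]; ring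
    have hkh := mul_lt_mul_of_pos_left h hk
    have hAu : (x - Tbs) / (x - Tbu) * (lam2 - k * φ Tbu) = 0 := by
      rw [show lam2 - k * φ Tbu = 0 by linarith]; ring
    have hsum2 : (x - Tbs) / (x - Tbu) * lam2 + (Tbs - Tbu) / (x - Tbu) * lam2 = lam2 := by
      rw [div_mul_eq_mul_div, div_mul_eq_mul_div, ← add_div,
        div_eq_iff (ne_of_gt hba)]
      ring
    have hBlt : (Tbs - Tbu) / (x - Tbu) * lam2 < (Tbs - Tbu) / (x - Tbu) * (k * φ x) := by
      nlinarith [hkh, hAu, hsum2, hφs]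
    have hφx : lam2 - k * φ x < 0 := by
      have := (mul_lt_mul_iff_right₀ hB).mp hBlt
      linarith
    rw [hfac x hx0]
    exact mul_neg_of_pos_of_neg (hnum x hx0) hφx
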